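/- Let α ∈ (0,1), p > 0 and k ∈ ℕ with α < k − 1/p, and let h_k(x) = ∑_{j=0}^{k} (−1)^j (k choose j)(x−j)_+^α. Then for every u ∈ [0,1] the series V(u) := ∑_{l=0}^{∞} |h_k(l + u)|^p converges, and sup_{u∈[0,1]} V(u) < ∞. -/

import Mathlib

noncomputable def Dfd (β : ℝ) (m : ℕ) (x : ℝ) : ℝ :=
  ∑ j ∈ Finset.range (m+1), (-1:ℝ)^j * (m.choose j : ℝ) * (max (x - j) 0) ^ β

lemma diff_succ (f : ℝ → ℝ) (m : ℕ) (x : ℝ) :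
    ∑ j ∈ Finset.range (m+1+1), (-1:ℝ)^j * ((m+1).choose j : ℝ) * f (x - j)
    = ∑ j ∈ Finset.range (m+1), (-1:ℝ)^j * (m.choose j : ℝ) * f (x - j)
      - ∑ j ∈ Finset.range (m+1), (-1:ℝ)^j * (m.choose j : ℝ) * f (x - 1 - j) := by
  have lemA : ∑ j ∈ Finset.range (m+1+1), (-1:ℝ)^j * ((m+1).choose j : ℝ) * f (x - j)
      = (∑ i ∈ Finset.range (m+1), (-1:ℝ)^(i+1) * (m.choose (i+1) : ℝ) * f (x - ((i+1:ℕ):ℝ)))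
        - (∑ i ∈ Finset.range (m+1), (-1:ℝ)^i * (m.choose i : ℝ) * f (x - ((i+1:ℕ):ℝ)))
        + f x := by
    rw [Finset.sum_range_succ'
      (fun j => (-1:ℝ)^j * ((m+1).choose j : ℝ) * f (x - (j:ℕ))) (m+1)]
    rw [← Finset.sum_sub_distrib]
    congr 1
    · refine Finset.sum_congr rfl fun i _ => ?_
      have h1 : ((m+1).choose (i+1) : ℝ) = (m.choose i : ℝ) + (m.choose (i+1) : ℝ) := by
        exact_mod_cast Nat.choose_succ_succ m i
      rw [h1]; ring
    · simp
  have lemB : ∑ i ∈ Finset.range (m+1), (-1:ℝ)^(i+1) * (m.choose (i+1) : ℝ) * f (x - ((i+1:ℕ):ℝ))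
      = ∑ j ∈ Finset.range (m+1), (-1:ℝ)^j * (m.choose j : ℝ) * f (x - j) - f x := by
    have h1 := Finset.sum_range_succ'
      (fun j => (-1:ℝ)^j * (m.choose j : ℝ) * f (x - (j:ℕ))) (m+1)
    have h2 := Finset.sum_range_succ
      (fun j => (-1:ℝ)^j * (m.choose j : ℝ) * f (x - (j:ℕ))) (m+1)
    rw [h2] at h1
    simp only [Nat.choose_succ_self, Nat.cast_zero, Nat.cast_ofNat, pow_zero,
      Nat.choose_zero_right, Nat.cast_one, one_mul, mul_one, sub_zero, mul_zero, zero_mul,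
      add_zero] at h1
    linarith [h1]
  have lemC : ∑ i ∈ Finset.range (m+1), (-1:ℝ)^i * (m.choose i : ℝ) * f (x - ((i+1:ℕ):ℝ))
      = ∑ i ∈ Finset.range (m+1), (-1:ℝ)^i * (m.choose i : ℝ) * f (x - 1 - i) := by
    refine Finset.sum_congr rfl fun i _ => ?_
    have : x - ((i+1:ℕ):ℝ) = x - 1 - i := by push_cast; ring
    rw [this]
  rw [lemA, lemB, lemC]; ring

lemma Dfd_succ (β : ℝ) (m : ℕ) (x : ℝ) :
    Dfd β (m+1) x = Dfd β m x - Dfd β m (x-1) := by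
  exact diff_succ (fun t => (max t 0) ^ β) m x

lemma Dfd_eq_of_gt {β : ℝ} {m : ℕ} {x : ℝ} (hx : (m:ℝ) < x) :
    Dfd β m x = ∑ j ∈ Finset.range (m+1), (-1:ℝ)^j * (m.choose j : ℝ) * (x - j) ^ β := by
  refine Finset.sum_congr rfl fun j hj => ?_
  have hj' : (j:ℝ) ≤ m := by exact_mod_cast Nat.lt_succ_iff.mp (Finset.mem_range.mp hj)
  rw [max_eq_left (by linarith)]

-- the FTC-style identity

lemma Dfd_diff_eq_integral (β : ℝ) (hβ : β ≠ 0) (m : ℕ) (x : ℝ) (hx : (m:ℝ) + 1 < x) :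
    Dfd β m x - Dfd β m (x-1)
      = ∫ s in (x-1)..x, β * ∑ j ∈ Finset.range (m+1),
          (-1:ℝ)^j * (m.choose j : ℝ) * (s - j) ^ (β-1) := by
  have hm1 : (m:ℝ) < x - 1 := by linarith
  have hm2 : (m:ℝ) < x := by linarith
  have hint : ∀ j ∈ Finset.range (m+1), IntervalIntegrable
      (fun s => (-1:ℝ)^j * (m.choose j : ℝ) * (s - j) ^ (β-1))
      MeasureTheory.volume (x-1) x := by
    intro j hj
    have hj' : (j:ℝ) ≤ m := by exact_mod_cast Nat.lt_succ_iff.mp (Finset.mem_range.mp hj)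
    apply ContinuousOn.intervalIntegrable
    apply ContinuousOn.mul continuousOn_const
    apply ContinuousOn.rpow_const
    · exact (continuous_id.sub continuous_const).continuousOn
    · intro s hs
      rw [Set.uIcc_of_le (by linarith : x - 1 ≤ x)] at hs
      left
      have := hs.1
      intro hzero
      nlinarith [hs.1]
  calc Dfd β m x - Dfd β m (x-1)
      = ∑ j ∈ Finset.range (m+1), (-1:ℝ)^j * (m.choose j : ℝ) * ((x - j)^β - (x - 1 - j)^β) := by
        rw [Dfd_eq_of_gt hm2, Dfd_eq_of_gt hm1, ← Finset.sum_sub_distrib]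
        exact Finset.sum_congr rfl fun j _ => by ring
    _ = ∑ j ∈ Finset.range (m+1), ∫ s in (x-1)..x,
          β * ((-1:ℝ)^j * (m.choose j : ℝ) * (s - j) ^ (β-1)) := by
        refine Finset.sum_congr rfl fun j hj => ?_
        have hj' : (j:ℝ) ≤ m := by exact_mod_cast Nat.lt_succ_iff.mp (Finset.mem_range.mp hj)
        have key : ∫ s in (x-1)..x, (s - j) ^ (β-1) = ((x - j)^β - (x - 1 - j)^β) / β := by
          rw [intervalIntegral.integral_comp_sub_right (fun t => t ^ (β-1)) (j:ℝ)]
          rw [integral_rpow (Or.inr ⟨by intro hc; apply hβ; linarith, ?_⟩)]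
          · ring_nf
          · rw [Set.uIcc_of_le (by linarith : x - 1 - (j:ℝ) ≤ x - j)]
            intro hc
            have := hc.1
            linarith [hc.1]
        rw [intervalIntegral.integral_const_mul, intervalIntegral.integral_const_mul, key]
        field_simp
    _ = ∫ s in (x-1)..x, ∑ j ∈ Finset.range (m+1),
          β * ((-1:ℝ)^j * (m.choose j : ℝ) * (s - j) ^ (β-1)) :=
        (intervalIntegral.integral_finset_sum
          (fun j hj => (hint j hj).const_mul β)).symm
    _ = ∫ s in (x-1)..x, β * ∑ j ∈ Finset.range (m+1),
          (-1:ℝ)^j * (m.choose j : ℝ) * (s - j) ^ (β-1) := by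
        refine intervalIntegral.integral_congr fun s _ => ?_
        rw [Finset.mul_sum]

lemma Dfd_bound : ∀ (m : ℕ) (β : ℝ), β < m → (∀ n : ℕ, β ≠ n) →
    ∃ C : ℝ, 0 ≤ C ∧ ∀ x : ℝ, (m:ℝ) < x → |Dfd β m x| ≤ C * (x - m) ^ (β - m) := by
  intro m
  induction m with
  | zero =>
    intro β hβ hne
    refine ⟨1, zero_le_one, fun x hx => ?_⟩
    have hx0 : (0:ℝ) < x := by exact_mod_cast hx
    have : Dfd β 0 x = x ^ β := by
      simp [Dfd, max_eq_left hx0.le]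
    rw [this, abs_of_nonneg (Real.rpow_nonneg hx0.le β)]
    simp
  | succ m ih =>
    intro β hβ hne
    have hne' : ∀ n : ℕ, β - 1 ≠ n := by
      intro n hc
      exact hne (n+1) (by push_cast; linarith)
    have hβ' : β - 1 < m := by push_cast at hβ ⊢; linarith
    obtain ⟨C, hC0, hC⟩ := ih (β - 1) hβ' hne'
    refine ⟨|β| * C, by positivity, fun x hx => ?_⟩
    have hxm : (m:ℝ) + 1 < x := by push_cast at hx; linarith
    have hβ0 : β ≠ 0 := hne 0 ∘ (by exact_mod_cast ·)
    rw [Dfd_succ, Dfd_diff_eq_integral β hβ0 m x hxm]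
    have hbound : ∀ s ∈ Set.uIoc (x-1) x,
        ‖β * ∑ j ∈ Finset.range (m+1), (-1:ℝ)^j * (m.choose j : ℝ) * (s - j) ^ (β-1)‖
          ≤ |β| * C * (x - 1 - m) ^ (β - 1 - m) := by
      intro s hs
      rw [Set.uIoc_of_le (by linarith : x - 1 ≤ x)] at hs
      have hsm : (m:ℝ) < s := by linarith [hs.1]
      have hsum : ∑ j ∈ Finset.range (m+1), (-1:ℝ)^j * (m.choose j : ℝ) * (s - j) ^ (β-1)
          = Dfd (β-1) m s := (Dfd_eq_of_gt hsm).symm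
      rw [hsum, norm_mul, Real.norm_eq_abs, Real.norm_eq_abs, mul_assoc]
      refine mul_le_mul_of_nonneg_left ?_ (abs_nonneg β)
      refine (hC s hsm).trans ?_
      refine mul_le_mul_of_nonneg_left ?_ hC0
      exact Real.rpow_le_rpow_of_nonpos (by linarith) (by linarith [hs.1]) (by linarith)
    have := intervalIntegral.norm_integral_le_of_norm_le_const hbound
    rw [Real.norm_eq_abs] at this
    have hxx : |x - (x-1)| = 1 := by rw [abs_of_nonneg (by linarith)]; ring
    rw [hxx, mul_one] at this
    refine this.trans ?_
    have harg : x - 1 - (m:ℝ) = x - ((m+1:ℕ):ℝ) := by push_cast; ring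
    have hexp : β - 1 - (m:ℝ) = β - ((m+1:ℕ):ℝ) := by push_cast; ring
    rw [harg, hexp]

/-- For `α ∈ (0,1)`, `p > 0`, `k ∈ ℕ` with `α < k - 1/p`, the series
`V(u) = ∑_{l≥0} |h_k(l+u)|^p` converges for every `u ∈ [0,1]`, and
`sup_{u ∈ [0,1]} V(u) < ∞`. -/
theorem stmt_5 (α p : ℝ) (k : ℕ) (hα : α ∈ Set.Ioo (0 : ℝ) 1) (hp : 0 < p)
    (hk : 1 ≤ k) (h : α < (k : ℝ) - 1 / p) :
    (∀ u ∈ Set.Icc (0 : ℝ) 1,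
      Summable (fun l : ℕ =>
        |∑ j ∈ Finset.range (k + 1),
            (-1 : ℝ) ^ j * (k.choose j : ℝ) * (max ((l : ℝ) + u - (j : ℝ)) 0) ^ α| ^ p)) ∧
    ∃ C : ℝ, ∀ u ∈ Set.Icc (0 : ℝ) 1,
      (∑' l : ℕ,
        |∑ j ∈ Finset.range (k + 1),
            (-1 : ℝ) ^ j * (k.choose j : ℝ) * (max ((l : ℝ) + u - (j : ℝ)) 0) ^ α| ^ p) ≤ C := by
  obtain ⟨hα0, hα1⟩ := hα
  have hk1 : (1:ℝ) ≤ k := by exact_mod_cast hk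
  have hαk : α < (k:ℝ) := lt_of_lt_of_le hα1 hk1
  have hne : ∀ n : ℕ, α ≠ n := by
    rintro (_|n) hc
    · exact absurd hc (by exact_mod_cast hα0.ne')
    · have : (1:ℝ) ≤ ((n+1:ℕ):ℝ) := by exact_mod_cast Nat.succ_le_succ (Nat.zero_le n)
      push_cast at this hc; linarith
  obtain ⟨C, hC0, hC⟩ := Dfd_bound k α hαk hne
  set M : ℝ := 2^k * ((k:ℝ)+2) with hM
  have hM0 : (0:ℝ) ≤ M := by positivity
  -- bound for small arguments
  have habs : ∀ x : ℝ, x ≤ (k:ℝ)+2 → |Dfd α k x| ≤ M := by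
    intro x hx
    refine le_trans (Finset.abs_sum_le_sum_abs _ _) ?_
    have hterm : ∀ j ∈ Finset.range (k+1),
        |(-1:ℝ)^j * (k.choose j : ℝ) * (max (x - j) 0) ^ α| ≤ (k.choose j : ℝ) * ((k:ℝ)+2) := by
      intro j _
      rw [abs_mul, abs_mul, abs_pow, abs_neg, abs_one, one_pow, one_mul,
        abs_of_nonneg (by positivity : (0:ℝ) ≤ (k.choose j : ℝ)),
        abs_of_nonneg (Real.rpow_nonneg (le_max_right _ _) α)]
      refine mul_le_mul_of_nonneg_left ?_ (by positivity)
      have h1 : max (x - (j:ℝ)) 0 ≤ (k:ℝ)+2 :=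
        max_le (by have : (0:ℝ) ≤ j := Nat.cast_nonneg j; linarith) (by positivity)
      have h2 : (max (x - (j:ℝ)) 0) ^ α ≤ ((k:ℝ)+2) ^ α :=
        Real.rpow_le_rpow (le_max_right _ _) h1 hα0.le
      have h3 : ((k:ℝ)+2) ^ α ≤ ((k:ℝ)+2) ^ (1:ℝ) :=
        Real.rpow_le_rpow_of_exponent_le (by have : (0:ℝ) ≤ (k:ℝ) := Nat.cast_nonneg k; linarith) hα1.le
      rw [Real.rpow_one] at h3
      linarith
    refine le_trans (Finset.sum_le_sum hterm) ?_
    rw [← Finset.sum_mul, hM]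
    have : ∑ j ∈ Finset.range (k+1), (k.choose j : ℝ) = 2^k := by
      have := Nat.sum_range_choose k
      exact_mod_cast congrArg (fun n : ℕ => (n : ℝ)) this
    rw [this]
  -- exponent
  have hr : p * (α - (k:ℝ)) < -1 := by
    have h3 : p * (1/p) = 1 := by field_simp
    nlinarith [mul_lt_mul_of_pos_left h hp]
  -- majorant
  set g : ℕ → ℝ := fun l => if l ≤ k then M^p else C^p * ((l - k : ℕ) : ℝ)^(p*(α-(k:ℝ))) with hg
  have hgs : Summable g := by
    rw [← summable_nat_add_iff (k+1)]
    have heq : (fun n => g (n + (k+1))) = fun n : ℕ => C^p * (((n+1:ℕ)):ℝ)^(p*(α-(k:ℝ))) := by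
      funext n
      simp only [hg]
      rw [if_neg (by omega)]
      have : n + (k+1) - k = n+1 := by omega
      rw [this]
    rw [heq]
    apply Summable.mul_left
    exact (summable_nat_add_iff 1).2 (Real.summable_nat_rpow.2 hr)
  -- pointwise bound
  have hpt : ∀ u ∈ Set.Icc (0:ℝ) 1, ∀ l : ℕ, |Dfd α k ((l:ℝ) + u)| ^ p ≤ g l := by
    intro u hu l
    simp only [hg]
    by_cases hl : l ≤ k
    · rw [if_pos hl]
      refine Real.rpow_le_rpow (abs_nonneg _) (habs _ ?_) hp.le
      have : (l:ℝ) ≤ k := by exact_mod_cast hl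
      linarith [hu.2]
    · rw [if_neg hl]
      have hlk : k + 1 ≤ l := by omega
      have hlk' : (k:ℝ) + 1 ≤ l := by exact_mod_cast hlk
      have hx : (k:ℝ) < (l:ℝ) + u := by linarith [hu.1]
      have hbase : (1:ℝ) ≤ (l:ℝ) + u - k := by linarith [hu.1]
      have hexp0 : (α - (k:ℝ)) * p ≤ 0 :=
        mul_nonpos_of_nonpos_of_nonneg (by linarith) hp.le
      have hcast : ((l-k:ℕ):ℝ) = (l:ℝ) - k := by
        rw [Nat.cast_sub (by omega)]
      calc |Dfd α k ((l:ℝ)+u)| ^ p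
          ≤ (C * ((l:ℝ)+u-(k:ℝ)) ^ (α-(k:ℝ))) ^ p :=
            Real.rpow_le_rpow (abs_nonneg _) (hC _ hx) hp.le
        _ = C^p * (((l:ℝ)+u-(k:ℝ)) ^ (α-(k:ℝ))) ^ p :=
            Real.mul_rpow hC0 (Real.rpow_nonneg (by linarith) _)
        _ = C^p * ((l:ℝ)+u-(k:ℝ)) ^ ((α-(k:ℝ))*p) := by
            rw [← Real.rpow_mul (by linarith)]
        _ ≤ C^p * ((l-k:ℕ):ℝ) ^ ((α-(k:ℝ))*p) := by
            refine mul_le_mul_of_nonneg_left ?_ (Real.rpow_nonneg hC0 p)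
            rw [hcast]
            exact Real.rpow_le_rpow_of_nonpos (by linarith) (by linarith [hu.1]) hexp0
        _ = C^p * ((l-k:ℕ):ℝ) ^ (p*(α-(k:ℝ))) := by rw [mul_comm (α-(k:ℝ)) p]
  constructor
  · intro u hu
    exact Summable.of_nonneg_of_le
      (fun l => Real.rpow_nonneg (abs_nonneg _) p) (hpt u hu) hgs
  · refine ⟨∑' l, g l, fun u hu => ?_⟩
    exact Summable.tsum_le_tsum (hpt u hu)
      (Summable.of_nonneg_of_le (fun l => Real.rpow_nonneg (abs_nonneg _) p) (hpt u hu) hgs)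
      hgs
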